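/- Fix λ, γ > 0 and α ∈ ℝ. Then sup_{r ∈ [0,1]} ( 2λ sinh(α) r + 2γ √(r(1 − r)) ) = λ sinh(α) + √(γ² + λ² sinh²(α)). Consequently, sup over probability vectors ξ = (r, 1−r) on {1, −1} of λ(r e^{α} + (1−r) e^{−α} − 1) − γ(1 − 2√(r(1−r))) equals λ(cosh α − 1) + √(γ² + λ² sinh²(α)) − γ, so the free energy of the two-state active particle is F(α) = (2κ + γ′)(cosh α − 1) + √(γ′² + λ² sinh²(α)) − γ′ with γ′ = γ (here the Donsker–Varadhan rate function of the two-state flip chain with generator A = [[−1,1],[1,−1]] is I_e(ξ) = 1 − 2√(ξ₁ξ₋₁)). -/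

import Mathlib

lemma key_isGreatest (s g : ℝ) (hg : 0 < g) :
    IsGreatest ((fun r : ℝ => 2 * s * r + 2 * g * Real.sqrt (r * (1 - r))) '' Set.Icc 0 1)
      (s + Real.sqrt (g ^ 2 + s ^ 2)) := by
  set N := Real.sqrt (g ^ 2 + s ^ 2) with hNdef
  have hN : 0 < N := Real.sqrt_pos.mpr (by positivity)
  have hN2 : N ^ 2 = g ^ 2 + s ^ 2 := Real.sq_sqrt (by positivity)
  have hsN : |s| ≤ N := by
    rw [← Real.sqrt_sq_eq_abs]
    exact Real.sqrt_le_sqrt (by nlinarith)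
  have hsN' : -N ≤ s ∧ s ≤ N := abs_le.mp hsN
  constructor
  · refine ⟨(1 + s / N) / 2, ⟨?_, ?_⟩, ?_⟩
    · have h1 : -1 ≤ s / N := by rw [neg_le, ← neg_div, div_le_one hN]; linarith [hsN'.1]
      linarith
    · rw [div_le_one (by norm_num)]
      have : s / N ≤ 1 := (div_le_one hN).mpr hsN'.2
      linarith
    · simp only
      have hprod : (1 + s / N) / 2 * (1 - (1 + s / N) / 2) = (g / (2 * N)) ^ 2 := by
        field_simp
        nlinarith [hN2]
      rw [hprod, Real.sqrt_sq (by positivity)]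
      field_simp
      nlinarith [hN2]
  · rintro x ⟨r, ⟨hr0, hr1⟩, rfl⟩
    simp only
    have hw : Real.sqrt (r * (1 - r)) ^ 2 = r * (1 - r) := Real.sq_sqrt (by nlinarith)
    have hwn : 0 ≤ Real.sqrt (r * (1 - r)) := Real.sqrt_nonneg _
    nlinarith [sq_nonneg (s * (2 * Real.sqrt (r * (1 - r))) - g * (2 * r - 1)),
      sq_nonneg (2 * s * r + 2 * g * Real.sqrt (r * (1 - r)) - s - N), hN.le, hN2]

theorem two_state_free_energy_sup
    (lam γ α : ℝ) (hlam : 0 < lam) (hγ : 0 < γ) :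
    sSup ((fun r : ℝ => 2 * lam * Real.sinh α * r + 2 * γ * Real.sqrt (r * (1 - r))) ''
        Set.Icc 0 1) =
      lam * Real.sinh α + Real.sqrt (γ ^ 2 + lam ^ 2 * Real.sinh α ^ 2) ∧
    sSup ((fun r : ℝ => lam * (r * Real.exp α + (1 - r) * Real.exp (-α) - 1) -
          γ * (1 - 2 * Real.sqrt (r * (1 - r)))) '' Set.Icc 0 1) =
      lam * (Real.cosh α - 1) + Real.sqrt (γ ^ 2 + lam ^ 2 * Real.sinh α ^ 2) - γ := by
  set s := lam * Real.sinh α with hs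
  have hkey := key_isGreatest s γ hγ
  have hsq : γ ^ 2 + s ^ 2 = γ ^ 2 + lam ^ 2 * Real.sinh α ^ 2 := by rw [hs]; ring
  have hfun : (fun r : ℝ => 2 * lam * Real.sinh α * r + 2 * γ * Real.sqrt (r * (1 - r))) =
      (fun r : ℝ => 2 * s * r + 2 * γ * Real.sqrt (r * (1 - r))) := by
    funext r; rw [hs]; ring
  constructor
  · rw [hfun, ← hsq]
    exact hkey.csSup_eq
  · set C := lam * (Real.cosh α - 1) - s - γ with hC
    have hfun2 : (fun r : ℝ => lam * (r * Real.exp α + (1 - r) * Real.exp (-α) - 1) -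
          γ * (1 - 2 * Real.sqrt (r * (1 - r)))) =
        (fun r : ℝ => (2 * s * r + 2 * γ * Real.sqrt (r * (1 - r))) + C) := by
      funext r
      rw [hC, hs, Real.cosh_eq, Real.sinh_eq]
      ring
    have hkey2 : IsGreatest ((fun r : ℝ => (2 * s * r + 2 * γ * Real.sqrt (r * (1 - r))) + C) ''
        Set.Icc 0 1) (s + Real.sqrt (γ ^ 2 + s ^ 2) + C) := by
      constructor
      · obtain ⟨r, hr, hrv⟩ := hkey.1
        exact ⟨r, hr, by simp only at hrv ⊢; rw [hrv]⟩
      · rintro x ⟨r, hr, rfl⟩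
        exact add_le_add_left (hkey.2 ⟨r, hr, rfl⟩) C
    rw [hfun2, hkey2.csSup_eq, hC, ← hsq]
    ring
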